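/- arXiv:1208.2823 — 2 statements merged into one kernel-verified Lean document; each statement's English description precedes it below -/
import Mathlib

section
/- Let V be a real subspace of ℂ^n and let P : V → V be the real-linear endomorphism P v = π_V(Jv). Then −P² is a self-adjoint positive semidefinite endomorphism of V, every eigenvalue c of −P² satisfies 0 ≤ c ≤ 1, and for each such eigenvalue c the eigenspace W = ker(−P² − c·id) is a real subspace of ℂ^n of constant Kähler angle arccos(√c); that is, ‖π_W(Jw)‖² = c·‖w‖² for every w ∈ W. -/
set_option maxHeartbeats 1000000
noncomputable section

/-- `ℂ^n` as a Euclidean space. -/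
abbrev En (n : ℕ) : Type := EuclideanSpace ℂ (Fin n)

/-- The complex structure `J`, multiplication by `i`. -/
def Jc {n : ℕ} (x : En n) : En n := Complex.I • x

/-- A real subspace `V` of `ℂ^n` has constant Kähler angle `φ` if
`‖π_V (J v)‖² = cos²(φ) ‖v‖²` for all `v ∈ V`. -/
def HasConstKahlerAngle {n : ℕ} (V : Submodule ℝ (En n)) (φ : ℝ) : Prop :=
  ∀ v ∈ V, ‖(Submodule.orthogonalProjection V (Jc v) : En n)‖ ^ 2 = Real.cos φ ^ 2 * ‖v‖ ^ 2

lemma Jc_skew {n : ℕ} (x y : En n) : (inner ℝ (Jc x) y : ℝ) = - inner ℝ x (Jc y) := by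
  simp only [Jc, PiLp.inner_apply, ← Finset.sum_neg_distrib]
  refine Finset.sum_congr rfl fun i _ => ?_
  simp [Complex.inner, PiLp.smul_apply, Complex.mul_re, Complex.mul_im]
  ring

lemma Jc_norm {n : ℕ} (x : En n) : ‖Jc x‖ = ‖x‖ := by
  simp [Jc, norm_smul]

/-- For `P = π_V ∘ J` on a real subspace `V` of `ℂ^n`, the operator `-P²` is
self-adjoint and positive semidefinite, its eigenvalues lie in `[0,1]`, and each
eigenspace, viewed as a real subspace of `ℂ^n`, has constant Kähler angle
`arccos √c`. -/
theorem neg_P_sq_selfAdjoint_psd_eigenspaces (n : ℕ) (V : Submodule ℝ (En n))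
    (P : V →ₗ[ℝ] V) (hP : ∀ v : V, P v = Submodule.orthogonalProjection V (Jc (v : En n))) :
    (∀ v w : V, (inner ℝ ((-(P ∘ₗ P)) v) w : ℝ) = inner ℝ v ((-(P ∘ₗ P)) w)) ∧
    (∀ v : V, 0 ≤ (inner ℝ ((-(P ∘ₗ P)) v) v : ℝ)) ∧
    (∀ c : ℝ, Module.End.HasEigenvalue (-(P ∘ₗ P)) c → 0 ≤ c ∧ c ≤ 1) ∧
    (∀ c : ℝ, Module.End.HasEigenvalue (-(P ∘ₗ P)) c →
      HasConstKahlerAngle ((Module.End.eigenspace (-(P ∘ₗ P)) c).map V.subtype)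
        (Real.arccos (Real.sqrt c)) ∧
      ∀ w ∈ (Module.End.eigenspace (-(P ∘ₗ P)) c).map V.subtype,
        ‖(Submodule.orthogonalProjection ((Module.End.eigenspace (-(P ∘ₗ P)) c).map V.subtype)
            (Jc w) : En n)‖ ^ 2 = c * ‖w‖ ^ 2) := by
  -- P is skew-adjoint
  have hPskew : ∀ v w : V, (inner ℝ (P v) w : ℝ) = - inner ℝ v (P w) := by
    intro v w
    rw [hP v, hP w, Submodule.inner_orthogonalProjection_eq_of_mem_right (K := V) w (Jc (v : En n)),
      Submodule.inner_orthogonalProjection_eq_of_mem_left (K := V) v (Jc (w : En n))]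
    exact Jc_skew _ _
  have happ : ∀ v : V, (-(P ∘ₗ P)) v = -(P (P v)) := fun v => rfl
  have key : ∀ v w : V, (inner ℝ ((-(P ∘ₗ P)) v) w : ℝ) = inner ℝ (P v) (P w) := by
    intro v w
    rw [happ, inner_neg_left (𝕜 := ℝ) (P (P v)) w, hPskew (P v) w, neg_neg]
  -- norm bound on P
  have hPnorm : ∀ v : V, ‖P v‖ ≤ ‖v‖ := by
    intro v
    rw [hP v]
    calc ‖(Submodule.orthogonalProjection V (Jc (v : En n)))‖
        ≤ ‖Jc (v : En n)‖ := by
          simpa using (Submodule.orthogonalProjection V).le_of_opNorm_le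
            (Submodule.orthogonalProjectionOnto_norm_le V) (Jc (v : En n))
      _ = ‖v‖ := by rw [Jc_norm]; rfl
  have hquad : ∀ (c : ℝ) (v : V), (-(P ∘ₗ P)) v = c • v → ‖P v‖ ^ 2 = c * ‖v‖ ^ 2 := by
    intro c v hv
    have h1 : (inner ℝ ((-(P ∘ₗ P)) v) v : ℝ) = inner ℝ (P v) (P v) := key v v
    rw [hv, real_inner_smul_left v v c, real_inner_self_eq_norm_sq v,
      real_inner_self_eq_norm_sq (P v)] at h1
    linarith
  -- eigenvalue bounds
  have hbound : ∀ c : ℝ, Module.End.HasEigenvalue (-(P ∘ₗ P)) c → 0 ≤ c ∧ c ≤ 1 := by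
    intro c hc
    obtain ⟨v, hv⟩ := hc.exists_hasEigenvector
    have hq := hquad c v hv.apply_eq_smul
    have hv0 : 0 < ‖v‖ := norm_pos_iff.mpr hv.right
    have hle := hPnorm v
    have h0 : (0:ℝ) ≤ ‖P v‖ := norm_nonneg _
    have hsq : ‖P v‖ ^ 2 ≤ ‖v‖ ^ 2 := pow_le_pow_left₀ h0 hle 2
    have hvsq : (0:ℝ) < ‖v‖ ^ 2 := by positivity
    have hPsq : (0:ℝ) ≤ ‖P v‖ ^ 2 := by positivity
    constructor <;> nlinarith [hq, hsq, hvsq, hPsq]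
  refine ⟨fun v w => ?_, fun v => ?_, hbound, fun c hc => ?_⟩
  · rw [key v w, happ, inner_neg_right (𝕜 := ℝ) v (P (P w)), hPskew v (P w)]
  · rw [key v v]; exact real_inner_self_nonneg (F := En n) (x := ((P v : V) : En n))
  · -- eigenspace part
    set W' := Module.End.eigenspace (-(P ∘ₗ P)) c with hW'
    set W := W'.map V.subtype with hW
    have hWV : W ≤ V := Submodule.map_subtype_le V W'
    have hc0 := hbound c hc
    -- eigenspace invariant under P
    have hPinv : ∀ v : V, v ∈ W' → P v ∈ W' := by
      intro v hv
      rw [Module.End.mem_eigenspace_iff] at hv ⊢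
      have : (-(P ∘ₗ P)) (P v) = P ((-(P ∘ₗ P)) v) := by
        simp [happ, map_neg]
      rw [this, hv, map_smul]
    -- main computation
    have main : ∀ w ∈ W, ‖(Submodule.orthogonalProjection W (Jc w) : En n)‖ ^ 2 = c * ‖w‖ ^ 2 := by
      rintro w ⟨v, hvW', rfl⟩
      have hproj : Submodule.orthogonalProjection W (Jc (v : En n))
          = Submodule.orthogonalProjection W (Submodule.orthogonalProjection V (Jc (v : En n)) : En n) :=
        (Submodule.orthogonalProjectionOnto_starProjection_of_le hWV _).symm
      have hmem : ((P v : V) : En n) ∈ W := ⟨P v, hPinv v hvW', rfl⟩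
      have hself : (Submodule.orthogonalProjection W ((P v : V) : En n) : En n) = ((P v : V) : En n) :=
        Submodule.starProjection_eq_self_iff.mpr hmem
      simp only [Submodule.subtype_apply]
      have : (Submodule.orthogonalProjection W (Jc ((v : V) : En n)) : En n) = ((P v : V) : En n) := by
        rw [hproj, ← hP v, hself]
      rw [this]
      have heig : (-(P ∘ₗ P)) v = c • v := Module.End.mem_eigenspace_iff.mp hvW'
      have hq := hquad c v heig
      simpa using hq
    refine ⟨fun w hw => ?_, main⟩
    rw [main w hw, Real.cos_arccos (by linarith [Real.sqrt_nonneg c]) (Real.sqrt_le_one.mpr hc0.2),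
      Real.sq_sqrt hc0.1]
end
end

section
/- Let V and W be real subspaces of ℂ^n with the same real dimension, both of constant Kähler angle φ for the same φ ∈ [0, π/2]. Then V and W are congruent under the unitary group: there exists a complex-linear isometric automorphism A of ℂ^n with A(V) = W. -/
noncomputable section

open Submodule Module
variable {n : ℕ}
local notation "⟪" x ", " y "⟫" => @inner ℂ _ _ x y
local notation "⟨" x ", " y "⟩ᵣ" => @inner ℝ _ _ x y

/-- shorthand for the coerced orthogonal projection -/
def pr (V : Submodule ℝ (En n)) (x : En n) : En n := (orthogonalProjection V x : En n)

lemma pr_mem (V : Submodule ℝ (En n)) (x : En n) : pr V x ∈ V := (orthogonalProjection V x).2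

lemma pr_inner_left (V : Submodule ℝ (En n)) (x : En n) {w : En n} (hw : w ∈ V) :
    ⟨pr V x, w⟩ᵣ = ⟨x, w⟩ᵣ := by
  have h : ⟨x - pr V x, w⟩ᵣ = 0 := Submodule.starProjection_inner_eq_zero x w hw
  rw [inner_sub_left] at h
  linarith

lemma pr_inner_right (V : Submodule ℝ (En n)) (x : En n) {w : En n} (hw : w ∈ V) :
    ⟨w, pr V x⟩ᵣ = ⟨w, x⟩ᵣ := by
  rw [real_inner_comm, pr_inner_left V x hw, real_inner_comm]

lemma pr_self (V : Submodule ℝ (En n)) {x : En n} (hx : x ∈ V) : pr V x = x := by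
  unfold pr; exact Submodule.starProjection_eq_self_iff.2 hx

lemma pr_add (V : Submodule ℝ (En n)) (x y : En n) : pr V (x + y) = pr V x + pr V y := by
  unfold pr; rw [map_add]; rfl

lemma pr_smul (V : Submodule ℝ (En n)) (c : ℝ) (x : En n) : pr V (c • x) = c • pr V x := by
  unfold pr; rw [map_smul]; rfl

lemma eq_zero_of_mem_of_orth {V : Submodule ℝ (En n)} {x : En n} (hx : x ∈ V)
    (h : ∀ w ∈ V, ⟨x, w⟩ᵣ = 0) : x = 0 := by
  have := h x hx
  rwa [real_inner_self_eq_norm_sq, pow_eq_zero_iff (by norm_num), norm_eq_zero] at this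

section Kahler
variable {V : Submodule ℝ (En n)} {φ : ℝ}

lemma norm_pr_J (hV : HasConstKahlerAngle V φ) {v : En n} (hv : v ∈ V) :
    ‖pr V (Jc v)‖ ^ 2 = Real.cos φ ^ 2 * ‖v‖ ^ 2 := hV v hv

lemma pr_J_polar (hV : HasConstKahlerAngle V φ) {v w : En n} (hv : v ∈ V) (hw : w ∈ V) :
    ⟨pr V (Jc v), pr V (Jc w)⟩ᵣ = Real.cos φ ^ 2 * ⟨v, w⟩ᵣ := by
  have hV' : ∀ x ∈ V, ‖pr V (Jc x)‖ ^ 2 = Real.cos φ ^ 2 * ‖x‖ ^ 2 := fun x hx => hV x hx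
  have hsum := hV' (v + w) (V.add_mem hv hw)
  have h1 := hV' v hv
  have h2 := hV' w hw
  have hJ : Jc (v + w) = Jc v + Jc w := by unfold Jc; rw [smul_add]
  rw [hJ, pr_add] at hsum
  have e1 : ‖pr V (Jc v) + pr V (Jc w)‖ ^ 2
      = ‖pr V (Jc v)‖ ^ 2 + 2 * ⟨pr V (Jc v), pr V (Jc w)⟩ᵣ + ‖pr V (Jc w)‖ ^ 2 := by
    rw [← real_inner_self_eq_norm_sq, real_inner_add_add_self,
      real_inner_self_eq_norm_sq, real_inner_self_eq_norm_sq]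
  have e2 : ‖v + w‖ ^ 2 = ‖v‖ ^ 2 + 2 * ⟨v, w⟩ᵣ + ‖w‖ ^ 2 := by
    rw [← real_inner_self_eq_norm_sq, real_inner_add_add_self,
      real_inner_self_eq_norm_sq, real_inner_self_eq_norm_sq]
  rw [e1, e2] at hsum
  rw [h1, h2] at hsum
  linarith [hsum]
end Kahler

lemma rinner_eq_re (x y : En n) : ⟨x, y⟩ᵣ = (⟪x, y⟫).re := by
  simp [PiLp.inner_apply, Complex.re_sum]

lemma rinner_J_left (x y : En n) : ⟨Jc x, y⟩ᵣ = (⟪x, y⟫).im := by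
  rw [rinner_eq_re]
  simp [Jc, inner_smul_left, Complex.conj_I]

lemma rinner_J_J (x y : En n) : ⟨Jc x, Jc y⟩ᵣ = ⟨x, y⟩ᵣ := by
  rw [rinner_eq_re, rinner_eq_re]
  simp [Jc, inner_smul_left, inner_smul_right, Complex.conj_I]

lemma rinner_J_right (x y : En n) : ⟨x, Jc y⟩ᵣ = -⟨Jc x, y⟩ᵣ := by
  rw [rinner_eq_re, rinner_eq_re]
  simp [Jc, inner_smul_left, inner_smul_right, Complex.conj_I]

lemma cinner_rsmul_left (r : ℝ) (x y : En n) : ⟪r • x, y⟫ = (r : ℂ) * ⟪x, y⟫ := by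
  rw [← algebraMap_smul ℂ r x, inner_smul_left]
  simp [Complex.conj_ofReal]

lemma cinner_rsmul_right (r : ℝ) (x y : En n) : ⟪x, r • y⟫ = (r : ℂ) * ⟪x, y⟫ := by
  rw [← algebraMap_smul ℂ r y, inner_smul_right]
  simp

lemma cinner_self_im (x : En n) : (⟪x, x⟫).im = 0 := by
  have := inner_self_im (𝕜 := ℂ) x
  simpa using this

lemma cinner_ext (x y : En n) : ⟪x, y⟫ = (⟨x, y⟩ᵣ : ℝ) + (⟨Jc x, y⟩ᵣ : ℝ) * Complex.I := by
  apply Complex.ext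
  · simp [rinner_eq_re]
  · rw [← rinner_J_left]; simp

-- skew symmetry
lemma pr_J_skew {V : Submodule ℝ (En n)} {v w : En n} (hv : v ∈ V) (hw : w ∈ V) :
    ⟨pr V (Jc v), w⟩ᵣ = -⟨v, pr V (Jc w)⟩ᵣ := by
  rw [pr_inner_left V _ hw, pr_inner_right V _ hv, rinner_J_right v w]
  ring

-- K² = -cos²φ
lemma pr_J_pr_J {V : Submodule ℝ (En n)} {φ : ℝ} (hV : HasConstKahlerAngle V φ)
    {v : En n} (hv : v ∈ V) :
    pr V (Jc (pr V (Jc v))) = -((Real.cos φ ^ 2) • v) := by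
  set z := pr V (Jc (pr V (Jc v))) + (Real.cos φ ^ 2) • v with hz
  have hzV : z ∈ V := V.add_mem (pr_mem _ _) (V.smul_mem _ hv)
  have hzo : ∀ w ∈ V, ⟨z, w⟩ᵣ = 0 := by
    intro w hw
    rw [hz, inner_add_left, real_inner_smul_left]
    have h1 : ⟨pr V (Jc (pr V (Jc v))), w⟩ᵣ = -⟨pr V (Jc v), pr V (Jc w)⟩ᵣ := by
      rw [pr_J_skew (pr_mem V (Jc v)) hw]
    rw [h1, pr_J_polar hV hv hw]
    ring
  have := eq_zero_of_mem_of_orth hzV hzo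
  rw [hz] at this
  linear_combination (norm := module) this

lemma exists_unitary_map {n : ℕ} {ι : Type} [Fintype ι] (v w : ι → En n)
    (hv : Orthonormal ℂ v) (hw : Orthonormal ℂ w) :
    ∃ A : En n ≃ₗᵢ[ℂ] En n, ∀ i, A (v i) = w i := by
  have hrank : finrank ℂ (En n) = n := finrank_euclideanSpace_fin
  have hcard : Fintype.card ι ≤ n := by
    have := hv.linearIndependent.fintype_card_le_finrank
    omega
  let g : ι ↪ Fin n := (Fintype.equivFin ι).toEmbedding.trans (Fin.castLEEmb hcard)
  have hg : Function.Injective g := g.injective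
  set s : Set (Fin n) := Set.range g with hs
  have hcards : finrank ℂ (En n) = Fintype.card (Fin n) := by simp [hrank]
  have key : ∀ u : ι → En n, Orthonormal ℂ u →
      ∃ b : OrthonormalBasis (Fin n) ℂ (En n), ∀ i, b (g i) = u i := by
    intro u hu
    set u' : Fin n → En n := Function.extend g u 0 with hu'
    have hres : Orthonormal ℂ (s.restrict u') := by
      have : s.restrict u' = u ∘ (fun x : s => (Equiv.ofInjective g hg).symm x) := by
        funext x
        have : (g ((Equiv.ofInjective g hg).symm x) : Fin n) = (x : Fin n) :=
          congrArg Subtype.val ((Equiv.ofInjective g hg).apply_symm_apply x)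
        simp only [Set.restrict_apply, Function.comp_apply, ← this, hu']
        change Function.extend g u 0 (x : Fin n) = _
        rw [← this]
        exact hg.extend_apply u 0 _
      rw [this]
      exact hu.comp _ (fun a b hab => by
        have := congrArg (Equiv.ofInjective g hg) hab
        simpa using this)
    obtain ⟨b, hb⟩ := hres.exists_orthonormalBasis_extension_of_card_eq hcards
    refine ⟨b, fun i => ?_⟩
    rw [hb (g i) ⟨i, rfl⟩]
    exact hg.extend_apply u 0 i
  obtain ⟨bV, hbV⟩ := key v hv
  obtain ⟨bW, hbW⟩ := key w hw
  refine ⟨bV.repr.trans bW.repr.symm, fun i => ?_⟩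
  have h1 : bV.repr (v i) = EuclideanSpace.single (g i) 1 := by
    rw [← hbV i]; exact bV.repr_self (g i)
  simp [LinearIsometryEquiv.trans_apply, h1, OrthonormalBasis.repr_symm_single, hbW i]

section Mid
open Submodule Module

lemma norm_eq_one_of_rinner {x : En n} (h : ⟨x, x⟩ᵣ = 1) : ‖x‖ = 1 := by
  rw [real_inner_self_eq_norm_sq] at h
  nlinarith [norm_nonneg x]

lemma mem_pair_orth_iff {a b x : En n} :
    x ∈ (span ℝ ({a, b} : Set (En n)))ᗮ ↔ ⟨a, x⟩ᵣ = 0 ∧ ⟨b, x⟩ᵣ = 0 := by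
  rw [Submodule.mem_orthogonal]
  constructor
  · intro h
    exact ⟨h a (subset_span (by simp)), h b (subset_span (by simp))⟩
  · rintro ⟨h1, h2⟩ u hu
    refine Submodule.span_induction ?_ ?_ ?_ ?_ hu
    · rintro y hy
      rcases Set.mem_insert_iff.1 hy with rfl | hy
      · exact h1
      · rw [Set.mem_singleton_iff.1 hy]; exact h2
    · simp
    · intro y z _ _ hy hz; rw [inner_add_left, hy, hz]; ring
    · intro c y _ hy; rw [real_inner_smul_left, hy]; ring

lemma Jc_smul (r : ℝ) (x : En n) : Jc (r • x) = r • Jc x := by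
  unfold Jc; rw [smul_comm]

/-- The family of `2m` spanning vectors determined by `(e, h)`. -/
def Fam (φ : ℝ) {m : ℕ} (e h : Fin m → En n) : (Fin m ⊕ Fin m) → En n :=
  Sum.elim e (fun j => Real.cos φ • Jc (e j) + Real.sin φ • h j)

/-- Adapted data for a subspace of intermediate constant Kähler angle. -/
def MidData (V : Submodule ℝ (En n)) (φ : ℝ) (m : ℕ) (e h : Fin m → En n) : Prop :=
  (∀ j, e j ∈ V) ∧ (∀ j, h j ∈ span ℂ (V : Set (En n))) ∧
  (∀ j k, ⟪e j, e k⟫ = if j = k then 1 else 0) ∧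
  (∀ j k, ⟪h j, h k⟫ = if j = k then 1 else 0) ∧
  (∀ j k, ⟪e j, h k⟫ = 0) ∧
  V = span ℝ (Set.range (Fam φ e h))

lemma midData_bot (φ : ℝ) : MidData (⊥ : Submodule ℝ (En n)) φ 0 Fin.elim0 Fin.elim0 := by
  refine ⟨fun j => j.elim0, fun j => j.elim0, fun j => j.elim0, fun j => j.elim0,
    fun j => j.elim0, ?_⟩
  rw [Set.range_eq_empty, span_empty]

set_option maxHeartbeats 1000000 in
lemma mid_rec (φ : ℝ) (hc : Real.cos φ ≠ 0) (hs : Real.sin φ ≠ 0) :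
    ∀ d (V : Submodule ℝ (En n)), finrank ℝ V ≤ d → HasConstKahlerAngle V φ →
    ∃ (m : ℕ) (e h : Fin m → En n), MidData V φ m e h := by
  intro d
  induction d with
  | zero =>
    intro V hr _
    have : V = ⊥ := Submodule.finrank_eq_zero.1 (Nat.le_zero.1 hr)
    exact ⟨0, Fin.elim0, Fin.elim0, this ▸ midData_bot φ⟩
  | succ d ih =>
    intro V hr hV
    by_cases hbot : V = ⊥
    · exact ⟨0, Fin.elim0, Fin.elim0, hbot ▸ midData_bot φ⟩
    obtain ⟨x, hxV, hx0⟩ := Submodule.exists_mem_ne_zero_of_ne_bot hbot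
    set e1 : En n := ‖x‖⁻¹ • x with he1def
    have he1V : e1 ∈ V := V.smul_mem _ hxV
    have he1 : ‖e1‖ = 1 := norm_smul_inv_norm hx0
    clear_value e1
    have hee : ⟨e1, e1⟩ᵣ = 1 := by rw [real_inner_self_eq_norm_sq, he1]; norm_num
    have hcos2 : (Real.cos φ) ^ 2 ≠ 0 := pow_ne_zero 2 hc
    set f1 : En n := (Real.cos φ)⁻¹ • pr V (Jc e1) with hf1def
    have hf1V : f1 ∈ V := V.smul_mem _ (pr_mem _ _)
    have hprJe1 : pr V (Jc e1) = Real.cos φ • f1 := by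
      rw [hf1def, smul_inv_smul₀ hc]
    clear_value f1
    have hf1f1 : ⟨f1, f1⟩ᵣ = 1 := by
      have hpp := pr_J_polar hV he1V he1V
      rw [hprJe1, real_inner_smul_left, real_inner_smul_right, hee, ← mul_assoc,
        ← sq] at hpp
      have := mul_left_cancel₀ hcos2 hpp
      linarith
    have hf1n : ‖f1‖ = 1 := norm_eq_one_of_rinner hf1f1
    have he1f1 : ⟨e1, f1⟩ᵣ = 0 := by
      have h0 : ⟨e1, pr V (Jc e1)⟩ᵣ = 0 := by
        rw [pr_inner_right V (Jc e1) he1V, rinner_J_right e1 e1, rinner_J_left, cinner_self_im]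
        ring
      rw [hprJe1, real_inner_smul_right] at h0
      rcases mul_eq_zero.1 h0 with h | h
      · exact absurd h hc
      · exact h
    have hprJf1 : pr V (Jc f1) = (-(Real.cos φ)) • e1 := by
      have h0 : pr V (Jc (pr V (Jc e1))) = -((Real.cos φ ^ 2) • e1) := pr_J_pr_J hV he1V
      rw [hprJe1, Jc_smul, pr_smul] at h0
      have h1 : Real.cos φ • pr V (Jc f1) = Real.cos φ • ((-(Real.cos φ)) • e1) := by
        rw [h0]; module
      exact smul_right_injective (En n) hc h1
    have hJe1f1 : ⟨Jc e1, f1⟩ᵣ = Real.cos φ := by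
      rw [← pr_inner_left V (Jc e1) hf1V, hprJe1, real_inner_smul_left, hf1f1]; ring
    have hJf1e1 : ⟨Jc f1, e1⟩ᵣ = -Real.cos φ := by
      rw [← pr_inner_left V (Jc f1) he1V, hprJf1, real_inner_smul_left, hee]; ring
    have hf1Je1 : ⟨f1, Jc e1⟩ᵣ = Real.cos φ := by
      rw [rinner_J_right f1 e1, hJf1e1]; ring
    have ce1e1 : ⟪e1, e1⟫ = 1 := by
      rw [cinner_ext, hee, rinner_J_left, cinner_self_im]
      norm_num
    have ce1f1 : ⟪e1, f1⟫ = (Real.cos φ : ℂ) * Complex.I := by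
      rw [cinner_ext, he1f1, hJe1f1]
      norm_num
    have ce1Je1 : ⟪e1, Jc e1⟫ = Complex.I := by
      unfold Jc
      rw [inner_smul_right, ce1e1]
      ring
    set h1 : En n := (Real.sin φ)⁻¹ • (f1 - Real.cos φ • Jc e1) with hh1def
    have hsh1 : Real.sin φ • h1 = f1 - Real.cos φ • Jc e1 := by
      rw [hh1def, smul_inv_smul₀ hs]
    clear_value h1
    have hF1 : Real.cos φ • Jc e1 + Real.sin φ • h1 = f1 := by
      rw [hsh1]; abel
    have ch1h1 : ⟨h1, h1⟩ᵣ = 1 := by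
      have hexp : ⟨f1 - Real.cos φ • Jc e1, f1 - Real.cos φ • Jc e1⟩ᵣ = Real.sin φ ^ 2 := by
        simp only [inner_sub_left, inner_sub_right, real_inner_smul_left, real_inner_smul_right]
        rw [hf1f1, hf1Je1, hJe1f1, rinner_J_J, hee]
        nlinarith [Real.sin_sq_add_cos_sq φ]
      have h0 : Real.sin φ * (Real.sin φ * ⟨h1, h1⟩ᵣ) = Real.sin φ ^ 2 := by
        calc Real.sin φ * (Real.sin φ * ⟨h1, h1⟩ᵣ)
            = ⟨Real.sin φ • h1, Real.sin φ • h1⟩ᵣ := by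
              rw [real_inner_smul_left, real_inner_smul_right]
          _ = Real.sin φ ^ 2 := by rw [hsh1]; exact hexp
      have h1' : Real.sin φ ^ 2 * ⟨h1, h1⟩ᵣ = Real.sin φ ^ 2 * 1 := by
        linear_combination h0
      exact mul_left_cancel₀ (pow_ne_zero 2 hs) h1'
    have hh1n : ‖h1‖ = 1 := norm_eq_one_of_rinner ch1h1
    have ce1h1 : ⟪e1, h1⟫ = 0 := by
      have h0 : ⟪e1, Real.sin φ • h1⟫ = 0 := by
        rw [hsh1, inner_sub_right, cinner_rsmul_right, ce1f1, ce1Je1]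
        ring
      rw [cinner_rsmul_right] at h0
      rcases mul_eq_zero.1 h0 with h | h
      · exact absurd (by exact_mod_cast h) hs
      · exact h
    -- the smaller subspace
    set S : Submodule ℝ (En n) := span ℝ ({e1, f1} : Set (En n)) with hSdef
    have hSV : S ≤ V := by
      rw [hSdef, span_le]
      rintro y hy
      rcases Set.mem_insert_iff.1 hy with rfl | hy
      · exact he1V
      · rw [Set.mem_singleton_iff.1 hy]; exact hf1V
    set V' : Submodule ℝ (En n) := Sᗮ ⊓ V with hV'def
    have hmem' : ∀ y : En n, y ∈ V' ↔ (⟨e1, y⟩ᵣ = 0 ∧ ⟨f1, y⟩ᵣ = 0) ∧ y ∈ V := by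
      intro y
      rw [hV'def, Submodule.mem_inf, hSdef, mem_pair_orth_iff]
    have hV'V : V' ≤ V := inf_le_right
    clear_value V'
    -- V' has the same constant Kähler angle
    have hangle' : HasConstKahlerAngle V' φ := by
      intro v hv
      obtain ⟨⟨hve, hvf⟩, hvV⟩ := (hmem' v).1 hv
      have hprV : pr V (Jc v) ∈ V' := by
        rw [hmem']
        refine ⟨⟨?_, ?_⟩, pr_mem _ _⟩
        · rw [pr_inner_right V (Jc v) he1V, rinner_J_right e1 v,
            ← pr_inner_left V (Jc e1) hvV, hprJe1, real_inner_smul_left, hvf]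
          ring
        · rw [pr_inner_right V (Jc v) hf1V, rinner_J_right f1 v,
            ← pr_inner_left V (Jc f1) hvV, hprJf1, real_inner_smul_left, hve]
          ring
      have heq : (orthogonalProjection V' (Jc v) : En n) = pr V (Jc v) :=
        eq_starProjection_of_mem_of_inner_eq_zero hprV
          (fun w hw => starProjection_inner_eq_zero (Jc v) w (hV'V hw))
      rw [heq]
      exact hV v hvV
    have he1nV' : e1 ∉ V' := by
      intro hmem
      have := ((hmem' e1).1 hmem).1.1
      rw [hee] at this
      norm_num at this
    have hrank' : finrank ℝ V' ≤ d := by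
      have hlt : V' < V := lt_of_le_of_ne hV'V (fun h => he1nV' (h.symm ▸ he1V))
      have := Submodule.finrank_lt_finrank_of_lt hlt
      omega
    obtain ⟨m, e', h', heV', hhV', hcee', hchh', hceh', hspan'⟩ := ih V' hrank' hangle'
    -- complex orthogonality of e1 and h1 to span ℂ V'
    have horthe0 : ∀ y ∈ V', ⟪e1, y⟫ = 0 := by
      intro y hy
      obtain ⟨⟨hye, hyf⟩, hyV⟩ := (hmem' y).1 hy
      rw [cinner_ext, hye, ← pr_inner_left V (Jc e1) hyV, hprJe1, real_inner_smul_left, hyf]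
      norm_num
    have horthf0 : ∀ y ∈ V', ⟪f1, y⟫ = 0 := by
      intro y hy
      obtain ⟨⟨hye, hyf⟩, hyV⟩ := (hmem' y).1 hy
      rw [cinner_ext, hyf, ← pr_inner_left V (Jc f1) hyV, hprJf1, real_inner_smul_left, hye]
      norm_num
    have horthh0 : ∀ y ∈ V', ⟪h1, y⟫ = 0 := by
      intro y hy
      have hJ : ⟪Jc e1, y⟫ = 0 := by
        unfold Jc
        rw [inner_smul_left, horthe0 y hy]
        ring
      have h0 : ⟪Real.sin φ • h1, y⟫ = 0 := by
        rw [hsh1, inner_sub_left, cinner_rsmul_left, horthf0 y hy, hJ]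
        ring
      rw [cinner_rsmul_left] at h0
      rcases mul_eq_zero.1 h0 with h | h
      · exact absurd (by exact_mod_cast h) hs
      · exact h
    have hspanorth : ∀ z : En n, (∀ y ∈ V', ⟪z, y⟫ = 0) →
        ∀ y ∈ span ℂ ((V' : Set (En n))), ⟪z, y⟫ = 0 := by
      intro z hz y hy
      refine Submodule.span_induction ?_ ?_ ?_ ?_ hy
      · exact fun u hu => hz u hu
      · exact inner_zero_right z
      · intro u v _ _ hu hv; rw [inner_add_right, hu, hv]; ring
      · intro c u _ hu; rw [inner_smul_right, hu]; ring
    have horthe := hspanorth e1 horthe0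
    have horthh := hspanorth h1 horthh0
    have hmemspan : ∀ y, y ∈ V' → y ∈ span ℂ ((V' : Set (En n))) :=
      fun y hy => subset_span hy
    -- assemble
    refine ⟨m + 1, Fin.cons e1 e', Fin.cons h1 h', ?_, ?_, ?_, ?_, ?_, ?_⟩
    · intro j
      refine Fin.cases ?_ ?_ j
      · simpa using he1V
      · intro k; simpa using hV'V (heV' k)
    · intro j
      refine Fin.cases ?_ ?_ j
      · rw [Fin.cons_zero, hh1def]
        rw [← algebraMap_smul ℂ ((Real.sin φ)⁻¹) (f1 - Real.cos φ • Jc e1)]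
        refine Submodule.smul_mem _ _ (Submodule.sub_mem _ (subset_span hf1V) ?_)
        rw [← algebraMap_smul ℂ (Real.cos φ) (Jc e1)]
        refine Submodule.smul_mem _ _ ?_
        exact Submodule.smul_mem _ Complex.I (subset_span he1V)
      · intro k
        rw [Fin.cons_succ]
        exact span_mono (fun y hy => hV'V hy) (hhV' k)
    · intro j k
      refine Fin.cases ?_ ?_ j <;> [skip; intro j'] <;> refine Fin.cases ?_ ?_ k <;>
        try intro k'
      · simpa using ce1e1
      · simp only [Fin.cons_zero, Fin.cons_succ]
        rw [if_neg (Fin.succ_ne_zero k').symm]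
        exact horthe _ (hmemspan _ (heV' k'))
      · simp only [Fin.cons_zero, Fin.cons_succ]
        rw [if_neg (Fin.succ_ne_zero j')]
        rw [← inner_eq_zero_symm]
        exact horthe _ (hmemspan _ (heV' j'))
      · simp only [Fin.cons_succ, Fin.succ_inj]
        exact hcee' j' k'
    · intro j k
      refine Fin.cases ?_ ?_ j <;> [skip; intro j'] <;> refine Fin.cases ?_ ?_ k <;>
        try intro k'
      · simp only [Fin.cons_zero, if_pos rfl]
        rw [cinner_ext, ch1h1, rinner_J_left, cinner_self_im]
        norm_num
      · simp only [Fin.cons_zero, Fin.cons_succ]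
        rw [if_neg (Fin.succ_ne_zero k').symm]
        exact horthh _ (hhV' k')
      · simp only [Fin.cons_zero, Fin.cons_succ]
        rw [if_neg (Fin.succ_ne_zero j')]
        rw [← inner_eq_zero_symm]
        exact horthh _ (hhV' j')
      · simp only [Fin.cons_succ, Fin.succ_inj]
        exact hchh' j' k'
    · intro j k
      refine Fin.cases ?_ ?_ j <;> [skip; intro j'] <;> refine Fin.cases ?_ ?_ k <;>
        try intro k'
      · simpa using ce1h1
      · simp only [Fin.cons_zero, Fin.cons_succ]
        exact horthe _ (hhV' k')
      · simp only [Fin.cons_zero, Fin.cons_succ]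
        rw [← inner_eq_zero_symm]
        exact horthh _ (hmemspan _ (heV' j'))
      · simp only [Fin.cons_succ]
        exact hceh' j' k'
    · -- the span condition
      have hrange : Set.range (Fam φ (Fin.cons e1 e') (Fin.cons h1 h')) =
          insert e1 (insert f1 (Set.range (Fam φ e' h'))) := by
        ext y
        constructor
        · rintro ⟨i, rfl⟩
          rcases i with j | j
          · refine Fin.cases ?_ ?_ j
            · left; simp [Fam]
            · intro j'
              right; right
              exact ⟨Sum.inl j', by simp [Fam]⟩
          · refine Fin.cases ?_ ?_ j
            · right; left
              simp only [Fam, Sum.elim_inr, Fin.cons_zero]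
              exact hF1
            · intro j'
              right; right
              exact ⟨Sum.inr j', by simp [Fam]⟩
        · rintro (rfl | rfl | ⟨i, rfl⟩)
          · exact ⟨Sum.inl 0, by simp [Fam]⟩
          · refine ⟨Sum.inr 0, ?_⟩
            simp only [Fam, Sum.elim_inr, Fin.cons_zero]
            first
            | exact hF1
            | exact hF1.symm
          · rcases i with j | j
            · exact ⟨Sum.inl j.succ, by simp [Fam]⟩
            · exact ⟨Sum.inr j.succ, by simp [Fam]⟩
      have hVsup : S ⊔ V' = V := by
        rw [hV'def]
        exact Submodule.sup_orthogonal_inf_of_hasOrthogonalProjection hSV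
      rw [hrange, span_insert, span_insert, ← hspan', ← hVsup, hSdef,
        show ({e1, f1} : Set (En n)) = insert e1 {f1} from rfl, span_insert, sup_assoc]

end Mid

section Rest
open Submodule Module

lemma norm_J (x : En n) : ‖Jc x‖ = ‖x‖ := by
  unfold Jc
  rw [norm_smul]
  simp

lemma Jc_Jc (x : En n) : Jc (Jc x) = -x := by
  unfold Jc
  rw [smul_smul, Complex.I_mul_I, neg_one_smul]

lemma Jc_add (x y : En n) : Jc (x + y) = Jc x + Jc y := by
  unfold Jc; rw [smul_add]

lemma Jc_zero : Jc (0 : En n) = 0 := by unfold Jc; rw [smul_zero]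

lemma span_range_coe_basis {𝕜 : Type*} [Field 𝕜] [Module 𝕜 (En n)] (U : Submodule 𝕜 (En n))
    {ι : Type*} (b : Basis ι 𝕜 ↥U) :
    span 𝕜 (Set.range (fun j => (b j : En n))) = U := by
  conv_rhs => rw [← Submodule.map_subtype_top U]
  rw [← b.span_eq, Submodule.map_span]
  congr 1
  rw [← Set.range_comp]
  rfl

/-- The orthogonal projection does not increase norms; if equal, the vector is in `V`. -/
lemma mem_of_norm_pr_eq (V : Submodule ℝ (En n)) (x : En n)
    (h : ‖pr V x‖ ^ 2 = ‖x‖ ^ 2) : x ∈ V := by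
  have horth : ⟨x - pr V x, pr V x⟩ᵣ = 0 :=
    starProjection_inner_eq_zero x _ (pr_mem V x)
  have hx : x = pr V x + (x - pr V x) := by abel
  have horth2 : ⟨pr V x, x - pr V x⟩ᵣ = 0 := by
    rw [real_inner_comm]; exact horth
  have hpy : ‖x‖ ^ 2 = ‖pr V x‖ ^ 2 + ‖x - pr V x‖ ^ 2 := by
    conv_lhs => rw [hx]
    rw [← real_inner_self_eq_norm_sq, inner_add_left, inner_add_right, inner_add_right,
      real_inner_self_eq_norm_sq, real_inner_self_eq_norm_sq, horth2, horth]
    ring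
  have : ‖x - pr V x‖ ^ 2 = 0 := by linarith
  have : x - pr V x = 0 := by
    rwa [pow_eq_zero_iff (by norm_num), norm_eq_zero] at this
  have : x = pr V x := by
    have := sub_eq_zero.1 this
    exact this
  rw [this]
  exact pr_mem V x

/-- Case `φ = π/2` : totally real data. -/
lemma totallyReal_data {V : Submodule ℝ (En n)} {φ : ℝ} (hV : HasConstKahlerAngle V φ)
    (hc : Real.cos φ = 0) :
    ∃ e : Fin (finrank ℝ V) → En n,
      (∀ i j, ⟪e i, e j⟫ = if i = j then 1 else 0) ∧
      V = span ℝ (Set.range e) := by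
  have hz : ∀ v ∈ V, pr V (Jc v) = 0 := by
    intro v hv
    have h0 := hV v hv
    rw [hc] at h0
    have h1 : ‖pr V (Jc v)‖ ^ 2 = 0 := by unfold pr; rw [h0]; ring
    have h2 : ‖pr V (Jc v)‖ = 0 := (pow_eq_zero_iff (by norm_num)).1 h1
    exact norm_eq_zero.1 h2
  set b := stdOrthonormalBasis ℝ ↥V with hb
  refine ⟨fun j => (b j : En n), ?_, ?_⟩
  · intro i j
    have hre : ⟨(b i : En n), (b j : En n)⟩ᵣ = if i = j then 1 else 0 := by
      have := orthonormal_iff_ite.1 b.orthonormal i j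
      rwa [Submodule.coe_inner] at this
    rw [cinner_ext, hre, ← pr_inner_left V (Jc (b i : En n)) (b j).2, hz _ (b i).2,
      inner_zero_left]
    push_cast
    split <;> norm_num
  · have h1 : (fun j => ((b.toBasis j : ↥V) : En n)) = (fun j => ((b j : ↥V) : En n)) := by
      funext j
      rw [OrthonormalBasis.coe_toBasis]
    have h2 := span_range_coe_basis V b.toBasis
    rw [h1] at h2
    exact h2.symm

/-- Case `φ = 0` : complex data. -/
lemma complexCase_data {V : Submodule ℝ (En n)} {φ : ℝ} (hV : HasConstKahlerAngle V φ)
    (hc : Real.cos φ ^ 2 = 1) :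
    ∃ (m : ℕ) (e : Fin m → En n),
      (∀ i j, ⟪e i, e j⟫ = if i = j then 1 else 0) ∧
      V = span ℝ (Set.range (Sum.elim e (fun j => Jc (e j)))) := by
  have hJmem : ∀ v ∈ V, Jc v ∈ V := by
    intro v hv
    apply mem_of_norm_pr_eq
    unfold pr
    rw [hV v hv, hc, norm_J]
    ring
  have hsmul : ∀ (c : ℂ) (v : En n), c • v = c.re • v + c.im • Jc v := by
    intro c v
    unfold Jc
    rw [← algebraMap_smul ℂ c.re v, ← algebraMap_smul ℂ c.im (Complex.I • v), smul_smul]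
    rw [← add_smul]
    congr 1
    simp [Complex.ext_iff]
  set Vc : Submodule ℂ (En n) :=
    { carrier := V
      add_mem' := fun ha hb => V.add_mem ha hb
      zero_mem' := V.zero_mem
      smul_mem' := fun c v hv => by
        simp only [SetLike.mem_coe] at hv ⊢
        rw [hsmul c v]
        exact V.add_mem (V.smul_mem _ hv) (V.smul_mem _ (hJmem v hv)) } with hVc
  have hmemVc : ∀ y : En n, y ∈ Vc ↔ y ∈ V := fun y => Iff.rfl
  set b := stdOrthonormalBasis ℂ ↥Vc with hb
  set e : Fin (finrank ℂ ↥Vc) → En n := fun j => (b j : En n) with he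
  refine ⟨finrank ℂ ↥Vc, e, ?_, ?_⟩
  · intro i j
    have := orthonormal_iff_ite.1 b.orthonormal i j
    rwa [Submodule.coe_inner] at this
  · have hspanC : span ℂ (Set.range e) = Vc := span_range_coe_basis Vc b.toBasis
    apply le_antisymm
    · -- V ≤ span ℝ
      intro v hv
      have hvC : v ∈ span ℂ (Set.range e) := by
        rw [hspanC]
        exact (hmemVc v).2 hv
      set R : Set (En n) := Set.range (Sum.elim e (fun j => Jc (e j))) with hR
      have hJR : ∀ y ∈ span ℝ R, Jc y ∈ span ℝ R := by
        intro y hy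
        refine Submodule.span_induction ?_ ?_ ?_ ?_ hy
        · rintro z ⟨i, rfl⟩
          rcases i with j | j
          · exact subset_span ⟨Sum.inr j, rfl⟩
          · simp only [Sum.elim_inr]
            rw [Jc_Jc]
            exact Submodule.neg_mem _ (subset_span ⟨Sum.inl j, rfl⟩)
        · rw [Jc_zero]; exact Submodule.zero_mem _
        · intro a b _ _ ha hb
          rw [Jc_add]; exact Submodule.add_mem _ ha hb
        · intro r a _ ha
          rw [Jc_smul]; exact Submodule.smul_mem _ _ ha
      refine Submodule.span_induction ?_ ?_ ?_ ?_ hvC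
      · rintro z ⟨j, rfl⟩
        exact subset_span ⟨Sum.inl j, rfl⟩
      · exact Submodule.zero_mem _
      · intro a b _ _ ha hb
        exact Submodule.add_mem _ ha hb
      · intro c a _ ha
        rw [hsmul c a]
        exact Submodule.add_mem _ (Submodule.smul_mem _ _ ha)
          (Submodule.smul_mem _ _ (hJR a ha))
    · rw [span_le]
      rintro y ⟨i, rfl⟩
      rcases i with j | j
      · exact (b j).2
      · simp only [Sum.elim_inr]
        exact SetLike.mem_coe.2 (hJmem _ ((hmemVc _).1 (b j).2))

/-- transporting spans through a unitary map -/
lemma image_span_eq (A : En n ≃ₗᵢ[ℂ] En n) {ι : Type} (f g : ι → En n)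
    (hfg : ∀ i, A (f i) = g i) {V W : Submodule ℝ (En n)}
    (hVs : V = span ℝ (Set.range f)) (hWs : W = span ℝ (Set.range g)) :
    ⇑A '' (V : Set (En n)) = (W : Set (En n)) := by
  set L : En n →ₗ[ℝ] En n := (A.toLinearEquiv.toLinearMap).restrictScalars ℝ with hL
  have hcoe : ⇑A = ⇑L := rfl
  have hmap : Submodule.map L V = W := by
    rw [hVs, hWs, Submodule.map_span]
    congr 1
    rw [← Set.range_comp]
    rw [show ⇑L ∘ f = g from funext fun i => hfg i]
  rw [hcoe, ← hmap]
  exact (Submodule.map_coe L V).symm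

lemma finrank_eq_card_of_span {ι : Type} [Fintype ι] [DecidableEq ι] {v : ι → En n}
    {V : Submodule ℝ (En n)} (hsp : V = span ℝ (Set.range v))
    (ho : ∀ i j, ⟨v i, v j⟩ᵣ = if i = j then 1 else 0) :
    finrank ℝ V = Fintype.card ι := by
  have horth : Orthonormal ℝ v := orthonormal_iff_ite.2 (fun i j => ho i j)
  rw [hsp, finrank_span_eq_card horth.linearIndependent]

end Rest

section Final
open Submodule Module

lemma cinner_J_left (x y : En n) : ⟪Jc x, y⟫ = -Complex.I * ⟪x, y⟫ := by
  unfold Jc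
  rw [inner_smul_left, Complex.conj_I]

lemma cinner_J_right (x y : En n) : ⟪x, Jc y⟫ = Complex.I * ⟪x, y⟫ := by
  unfold Jc
  rw [inner_smul_right]

lemma cinner_J_J' (x y : En n) : ⟪Jc x, Jc y⟫ = ⟪x, y⟫ := by
  rw [cinner_J_left, cinner_J_right]
  ring_nf
  rw [Complex.I_sq]
  ring

lemma ite_re {ι : Type} [DecidableEq ι] (i j : ι) :
    ((if i = j then (1 : ℂ) else 0)).re = if i = j then (1 : ℝ) else 0 := by
  split <;> norm_num

lemma ite_im {ι : Type} [DecidableEq ι] (i j : ι) :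
    ((if i = j then (1 : ℂ) else 0)).im = 0 := by
  split <;> norm_num

/-- real orthonormality of the mid-case spanning family -/
lemma mid_fam_real_ortho (φ : ℝ) {m : ℕ} (e h : Fin m → En n)
    (hee : ∀ j k, ⟪e j, e k⟫ = if j = k then 1 else 0)
    (hhh : ∀ j k, ⟪h j, h k⟫ = if j = k then 1 else 0)
    (heh : ∀ j k, ⟪e j, h k⟫ = 0) :
    ∀ i j, ⟨Fam φ e h i, Fam φ e h j⟩ᵣ = if i = j then 1 else 0 := by
  have key : ∀ j k, ⟨e j, Fam φ e h (Sum.inr k)⟩ᵣ = 0 := by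
    intro j k
    simp only [Fam, Sum.elim_inr]
    rw [rinner_eq_re, inner_add_right, cinner_rsmul_right, cinner_rsmul_right,
      cinner_J_right, hee, heh]
    simp only [mul_zero, add_zero, Complex.mul_re, Complex.I_re, Complex.I_im,
      Complex.ofReal_re, Complex.ofReal_im, ite_re, ite_im]
    ring
  rintro (j | j) (k | k)
  · simp only [Fam, Sum.elim_inl, rinner_eq_re, hee, ite_re, Sum.inl.injEq]
  · rw [show ((if Sum.inl j = Sum.inr k then (1:ℝ) else 0)) = 0 by simp]
    simpa [Fam] using key j k
  · rw [show ((if (Sum.inr j : Fin m ⊕ Fin m) = Sum.inl k then (1:ℝ) else 0)) = 0 by simp]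
    rw [real_inner_comm]
    simpa [Fam] using key k j
  · simp only [Fam, Sum.elim_inr, Sum.inr.injEq]
    have h1 : ⟪h j, e k⟫ = 0 := by
      rw [← inner_eq_zero_symm]
      exact heh k j
    have hc : ⟪Real.cos φ • Jc (e j) + Real.sin φ • h j,
        Real.cos φ • Jc (e k) + Real.sin φ • h k⟫
        = (((Real.sin φ) ^ 2 + (Real.cos φ) ^ 2 : ℝ) : ℂ) * (if j = k then 1 else 0) := by
      simp only [inner_add_left, inner_add_right, cinner_rsmul_left, cinner_rsmul_right]
      rw [cinner_J_J', cinner_J_left, cinner_J_right, hee, hhh, heh, h1]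
      push_cast
      ring
    rw [rinner_eq_re, hc, Real.sin_sq_add_cos_sq]
    simp only [Complex.ofReal_one, one_mul, ite_re]

lemma fam_inr (φ : ℝ) {m : ℕ} (e h : Fin m → En n) (j : Fin m) :
    Fam φ e h (Sum.inr j) =
      ((Real.cos φ : ℂ) * Complex.I) • e j + ((Real.sin φ : ℂ)) • h j := by
  simp only [Fam, Sum.elim_inr]
  rw [← algebraMap_smul ℂ (Real.cos φ) (Jc (e j)), ← algebraMap_smul ℂ (Real.sin φ) (h j)]
  unfold Jc
  rw [smul_smul]
  norm_num


/-- Two real subspaces of `ℂ^n` of the same real dimension and the same constant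
Kähler angle are congruent under the unitary group of `ℂ^n`. -/
theorem congruent_of_same_dim_same_kahler_angle (n : ℕ)
    (V W : Submodule ℝ (En n))
    (φ : ℝ) (hφ0 : 0 ≤ φ) (hφ1 : φ ≤ Real.pi / 2)
    (hdim : Module.finrank ℝ V = Module.finrank ℝ W)
    (hV : HasConstKahlerAngle V φ) (hW : HasConstKahlerAngle W φ) :
    ∃ A : En n ≃ₗᵢ[ℂ] En n, ⇑A '' (V : Set (En n)) = (W : Set (En n)) := by
  by_cases hcos : Real.cos φ = 0
  · -- totally real case
    obtain ⟨eV, hoV, hspV⟩ := totallyReal_data hV hcos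
    obtain ⟨eW, hoW, hspW⟩ := totallyReal_data hW hcos
    set eW' : Fin (finrank ℝ V) → En n := fun j => eW (Fin.cast hdim j) with heW'
    have hinj : Function.Injective (Fin.cast hdim) := fun a b hab => by
      apply Fin.ext
      have := congrArg Fin.val hab
      simpa using this
    have hsurj : Function.Surjective (Fin.cast hdim) :=
      fun b => ⟨Fin.cast hdim.symm b, rfl⟩
    have hoW' : ∀ i j, ⟪eW' i, eW' j⟫ = if i = j then 1 else 0 := by
      intro i j
      rw [heW']
      by_cases hij : i = j
      · subst hij; rw [hoW, if_pos rfl, if_pos rfl]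
      · rw [hoW, if_neg (fun hc => hij (hinj hc)), if_neg hij]
    have hspW' : W = span ℝ (Set.range eW') := by
      rw [hspW, heW']
      congr 1
      exact (Function.Surjective.range_comp hsurj eW).symm
    obtain ⟨A, hA⟩ := exists_unitary_map eV eW'
      (orthonormal_iff_ite.2 hoV) (orthonormal_iff_ite.2 hoW')
    exact ⟨A, image_span_eq A eV eW' hA hspV hspW'⟩
  by_cases hsin : Real.sin φ = 0
  · -- complex case
    have hc2 : Real.cos φ ^ 2 = 1 := by nlinarith [Real.sin_sq_add_cos_sq φ]
    obtain ⟨mV, eV, hoV, hspV⟩ := complexCase_data hV hc2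
    obtain ⟨mW, eW, hoW, hspW⟩ := complexCase_data hW hc2
    -- real orthonormality of the doubled family
    have hre : ∀ (m : ℕ) (e : Fin m → En n),
        (∀ i j, ⟪e i, e j⟫ = if i = j then 1 else 0) →
        ∀ i j, ⟨Sum.elim e (fun j => Jc (e j)) i, Sum.elim e (fun j => Jc (e j)) j⟩ᵣ
          = if i = j then 1 else 0 := by
      intro m e ho
      rintro (j | j) (k | k)
      · simp only [Sum.elim_inl, rinner_eq_re, ho, ite_re, Sum.inl.injEq]
      · simp only [Sum.elim_inl, Sum.elim_inr, rinner_eq_re, cinner_J_right, ho]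
        simp only [Complex.mul_re, Complex.I_re, Complex.I_im, ite_re, ite_im]
        simp
      · simp only [Sum.elim_inl, Sum.elim_inr, rinner_eq_re, cinner_J_left, ho]
        simp only [Complex.mul_re, Complex.neg_re, Complex.neg_im, Complex.I_re,
          Complex.I_im, ite_re, ite_im]
        simp
      · simp only [Sum.elim_inr, rinner_eq_re, cinner_J_J', ho, ite_re, Sum.inr.injEq]
    have hdV : finrank ℝ V = mV + mV := by
      rw [finrank_eq_card_of_span hspV (hre mV eV hoV)]
      simp
    have hdW : finrank ℝ W = mW + mW := by
      rw [finrank_eq_card_of_span hspW (hre mW eW hoW)]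
      simp
    have hm : mV = mW := by omega
    subst hm
    obtain ⟨A, hA⟩ := exists_unitary_map eV eW
      (orthonormal_iff_ite.2 hoV) (orthonormal_iff_ite.2 hoW)
    have hmap : ∀ i, A (Sum.elim eV (fun j => Jc (eV j)) i)
        = Sum.elim eW (fun j => Jc (eW j)) i := by
      rintro (j | j)
      · exact hA j
      · simp only [Sum.elim_inr]
        unfold Jc
        rw [map_smul, hA j]
    exact ⟨A, image_span_eq A _ _ hmap hspV hspW⟩
  · -- middle case
    obtain ⟨mV, eV, hV', hmV, hhV, heeV, hhhV, hehV, hspV⟩ :=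
      mid_rec φ hcos hsin (finrank ℝ V) V le_rfl hV
    obtain ⟨mW, eW, hW', hmW, hhW, heeW, hhhW, hehW, hspW⟩ :=
      mid_rec φ hcos hsin (finrank ℝ W) W le_rfl hW
    have hdV : finrank ℝ V = mV + mV := by
      rw [finrank_eq_card_of_span hspV (mid_fam_real_ortho φ eV hV' heeV hhhV hehV)]
      simp
    have hdW : finrank ℝ W = mW + mW := by
      rw [finrank_eq_card_of_span hspW (mid_fam_real_ortho φ eW hW' heeW hhhW hehW)]
      simp
    have hm : mV = mW := by omega
    subst hm
    have hoV2 : Orthonormal ℂ (Sum.elim eV hV') := by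
      rw [orthonormal_iff_ite]
      rintro (j | j) (k | k)
      · simpa using heeV j k
      · simpa using hehV j k
      · rw [show ((if (Sum.inr j : Fin mV ⊕ Fin mV) = Sum.inl k then (1:ℂ) else 0)) = 0
          by simp, Sum.elim_inr, Sum.elim_inl, ← inner_eq_zero_symm]
        exact hehV k j
      · simpa using hhhV j k
    have hoW2 : Orthonormal ℂ (Sum.elim eW hW') := by
      rw [orthonormal_iff_ite]
      rintro (j | j) (k | k)
      · simpa using heeW j k
      · simpa using hehW j k
      · rw [show ((if (Sum.inr j : Fin mV ⊕ Fin mV) = Sum.inl k then (1:ℂ) else 0)) = 0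
          by simp, Sum.elim_inr, Sum.elim_inl, ← inner_eq_zero_symm]
        exact hehW k j
      · simpa using hhhW j k
    obtain ⟨A, hA⟩ := exists_unitary_map _ _ hoV2 hoW2
    have hmap : ∀ i, A (Fam φ eV hV' i) = Fam φ eW hW' i := by
      rintro (j | j)
      · have := hA (Sum.inl j)
        simpa [Fam] using this
      · rw [fam_inr, fam_inr, map_add, map_smul, map_smul]
        have h1 := hA (Sum.inl j)
        have h2 := hA (Sum.inr j)
        simp only [Sum.elim_inl, Sum.elim_inr] at h1 h2
        rw [h1, h2]
    exact ⟨A, image_span_eq A _ _ hmap hspV hspW⟩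

end Final
end
end
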